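/- arXiv:2002.00263 — 2 statements merged into one kernel-verified Lean document; each statement's English description precedes it below -/
import Mathlib

section
/- Let Q be a finite set of edges with positive weight function w, let S ⊆ Q with |S| ≥ 2, and let e be an edge not in Q. Define λ(e) = (w(S) - w(e))/(|S| - 1). If w(Q)/|Q| ≥ λ(e), then the set Q' = (Q \ S) ∪ {e} satisfies w(Q')/|Q'| ≥ w(Q)/|Q|. -/
/-- Combinatorial core of the internal-subtree lemma: if `S ⊆ Q` with `|S| ≥ 2`,
`e ∉ Q`, and `w(Q)/|Q| ≥ λ(e) = (w(S) - w(e))/(|S| - 1)`, then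
`Q' = (Q \ S) ∪ {e}` has average weight at least that of `Q`. -/
theorem internal_avg_ge {α : Type*} [DecidableEq α] (w : α → ℝ) (hw : ∀ x, 0 < w x)
    (Q S : Finset α) (hQne : Q.Nonempty) (hS : S ⊆ Q) (hScard : 2 ≤ S.card)
    (e : α) (he : e ∉ Q)
    (hlam : (∑ x ∈ Q, w x) / (Q.card : ℝ) ≥ ((∑ x ∈ S, w x) - w e) / ((S.card : ℝ) - 1)) :
    (∑ x ∈ ((Q \ S) ∪ {e}), w x) / (((Q \ S) ∪ {e}).card : ℝ)
      ≥ (∑ x ∈ Q, w x) / (Q.card : ℝ) := by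
  have hdisj : Disjoint (Q \ S) ({e} : Finset α) := by
    simp only [Finset.disjoint_singleton_right, Finset.mem_sdiff, not_and]
    intro h; exact absurd h he
  have hsum : (∑ x ∈ ((Q \ S) ∪ {e}), w x)
      = (∑ x ∈ Q, w x) - (∑ x ∈ S, w x) + w e := by
    rw [Finset.sum_union hdisj, Finset.sum_sdiff_eq_sub hS, Finset.sum_singleton]
  have hcard : (((Q \ S) ∪ {e}).card : ℝ) = (Q.card : ℝ) - S.card + 1 := by
    rw [Finset.card_union_of_disjoint hdisj, Finset.card_sdiff_of_subset hS, Finset.card_singleton]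
    have := Finset.card_le_card hS
    push_cast [Nat.cast_sub this]
    ring
  have hsq : (S.card : ℝ) ≤ Q.card := by exact_mod_cast Finset.card_le_card hS
  have hs2 : (2 : ℝ) ≤ S.card := by exact_mod_cast hScard
  have hq : (0 : ℝ) < Q.card := by exact_mod_cast Finset.card_pos.mpr hQne
  have hq' : (0 : ℝ) < (Q.card : ℝ) - S.card + 1 := by linarith
  have hs1 : (0 : ℝ) < (S.card : ℝ) - 1 := by linarith
  rw [hsum, hcard, ge_iff_le, div_le_div_iff₀ hq hq']
  rw [ge_iff_le, div_le_div_iff₀ hs1 hq] at hlam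
  nlinarith [hlam]
end

section
/- Let T be a finite rooted tree with root v₀ and positive edge weights w, and let Q ≠ E⁺(v₀) be an edge cut separating v₀ from the leaves, with internal subtree H (the component of T − Q containing v₀). Let e be a leaf edge of H with |E⁺(e)| ≥ 2. Then at least one of the following holds: (i) λ(e) = (w(E⁺(e)) - w(e))/(|E⁺(e)| - 1) > w(Q)/|Q|, or (ii) the set Q' = (Q \ E⁺(e)) ∪ {e} is an edge cut separating v₀ from the leaves whose internal subtree H' satisfies |E(H')| < |E(H)|, and w(Q')/|Q'| ≥ w(Q)/|Q|. -/
/-- A finite rooted tree, encoded by a parent function: every vertex other than the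
root has a unique parent, edges are directed away from the root (from `parent v` to `v`),
and a rank function witnesses that every vertex is reachable from the root. -/
structure DiTree where
  V : Type
  [fin : Fintype V]
  [dec : DecidableEq V]
  root : V
  parent : V → V
  rank : V → ℕ
  parent_root : parent root = root
  rank_lt : ∀ v, v ≠ root → rank (parent v) < rank v

namespace DiTree

variable (T : DiTree)

instance : Fintype T.V := T.fin
instance : DecidableEq T.V := T.dec

/-- Edges of `T` are identified with their head vertices: the edge corresponding to a
non-root vertex `v` is the edge from `parent v` to `v`. -/
def IsEdge (v : T.V) : Prop := v ≠ T.root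

/-- The edge set of `T`. -/
def edges : Finset T.V := Finset.univ.filter fun v => v ≠ T.root

/-- The set of children of `v`, i.e. the heads of the out-edges `E⁺(v)`.
For an edge `e` this is also the set `E⁺(e)` of out-edges of the head of `e`. -/
def children (v : T.V) : Finset T.V :=
  Finset.univ.filter fun u => T.parent u = v ∧ u ≠ T.root

/-- A leaf is a vertex with no out-edges. -/
def IsLeaf (v : T.V) : Prop := T.children v = ∅

/-- `Q` is an edge cut separating the root from the set of leaves: it is a set of
edges meeting every directed path from the root to a leaf. -/
def IsCut (Q : Finset T.V) : Prop :=
  (∀ v ∈ Q, v ≠ T.root) ∧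
  ∀ l : T.V, T.IsLeaf l → l ≠ T.root → ∃ n : ℕ, T.parent^[n] l ∈ Q

/-- Average weight `w(X)/|X|` of an edge set `X`. -/
noncomputable def avg (w : T.V → ℝ) (X : Finset T.V) : ℝ := (∑ v ∈ X, w v) / (X.card : ℝ)

/-- The edge set of the internal subtree `H` of a cut `Q`: the edges of the component
of `T - Q` containing the root (an edge lies in `H` iff neither it nor any of its
ancestor edges belongs to `Q`). -/
noncomputable def internalEdges (Q : Finset T.V) : Finset T.V :=
  letI := Classical.decPred fun v : T.V => v ≠ T.root ∧ ∀ n : ℕ, T.parent^[n] v ∉ Q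
  Finset.univ.filter fun v => v ≠ T.root ∧ ∀ n : ℕ, T.parent^[n] v ∉ Q

/-- `e` is a leaf edge of the internal subtree of the cut `Q`: an edge of the internal
subtree whose head has no out-edge inside the internal subtree. -/
noncomputable def IsLeafEdgeOf (Q : Finset T.V) (e : T.V) : Prop :=
  e ∈ T.internalEdges Q ∧ ∀ u ∈ T.children e, u ∉ T.internalEdges Q

/-- Contractibility `λ(e) = (w(E⁺(e)) - w(e)) / (|E⁺(e)| - 1)` of an edge `e`. -/
noncomputable def lam (w : T.V → ℝ) (e : T.V) : ℝ :=
  ((∑ v ∈ T.children e, w v) - w e) / (((T.children e).card : ℝ) - 1)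

/-- `α₀ = w(E⁺(v₀)) / |E⁺(v₀)|`, the average weight of the out-edges of the root. -/
noncomputable def alpha0 (w : T.V → ℝ) : ℝ := T.avg w (T.children T.root)

end DiTree


namespace DiTree

lemma mem_internalEdges (T : DiTree) {Q : Finset T.V} {v : T.V} :
    v ∈ T.internalEdges Q ↔ v ≠ T.root ∧ ∀ n : ℕ, T.parent^[n] v ∉ Q := by
  classical
  simp [internalEdges]

end DiTree

/-- Lemma 2: for a root-separating cut `Q ≠ E⁺(v₀)` and a leaf edge `e` of its internal
subtree with `|E⁺(e)| ≥ 2`, either (i) `λ(e) > w(Q)/|Q|`, or (ii)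
`Q' = (Q \ E⁺(e)) ∪ {e}` is a root-separating cut with strictly smaller internal
subtree and average weight at least that of `Q`. -/
theorem internal_subtree_lemma (T : DiTree) (w : T.V → ℝ) (hw : ∀ v, 0 < w v)
    (Q : Finset T.V) (hQ : T.IsCut Q) (hQne : Q.Nonempty) (hne : Q ≠ T.children T.root)
    (e : T.V) (he : T.IsLeafEdgeOf Q e) (hcard : 2 ≤ (T.children e).card) :
    T.lam w e > T.avg w Q ∨
      (T.IsCut ((Q \ T.children e) ∪ {e}) ∧
        (T.internalEdges ((Q \ T.children e) ∪ {e})).card < (T.internalEdges Q).card ∧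
        T.avg w ((Q \ T.children e) ∪ {e}) ≥ T.avg w Q) := by
  classical
  set S := T.children e with hSdef
  set Q' := (Q \ S) ∪ {e} with hQ'def
  obtain ⟨heroot, heQiter⟩ := T.mem_internalEdges.mp he.1
  have heQ0 : e ∉ Q := by simpa using heQiter 0
  have hpar : ∀ u ∈ S, T.parent u = e := by
    intro u hu
    have : T.parent u = e ∧ u ≠ T.root := by
      simpa [hSdef, DiTree.children] using hu
    exact this.1
  have hSroot : ∀ u ∈ S, u ≠ T.root := by
    intro u hu
    have : T.parent u = e ∧ u ≠ T.root := by
      simpa [hSdef, DiTree.children] using hu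
    exact this.2
  have hSQ : S ⊆ Q := by
    intro u hu
    have hu' := he.2 u hu
    rw [T.mem_internalEdges] at hu'
    push_neg at hu'
    obtain ⟨n, hn⟩ := hu' (hSroot u hu)
    cases n with
    | zero => simpa using hn
    | succ m =>
      exfalso
      have h1 : T.parent^[m+1] u = T.parent^[m] e := by
        rw [Function.iterate_succ_apply, hpar u hu]
      rw [h1] at hn
      exact heQiter m hn
  have heQ' : e ∈ Q' := Finset.mem_union_right _ (Finset.mem_singleton_self e)
  -- Q' is a cut
  have hcut : T.IsCut Q' := by
    constructor
    · intro v hv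
      rcases Finset.mem_union.mp hv with h | h
      · exact hQ.1 v (Finset.mem_sdiff.mp h).1
      · rw [Finset.mem_singleton] at h; subst h; exact heroot
    · intro l hl hlr
      obtain ⟨n, hn⟩ := hQ.2 l hl hlr
      by_cases hnS : T.parent^[n] l ∈ S
      · refine ⟨n + 1, ?_⟩
        rw [Function.iterate_succ_apply', hpar _ hnS]
        exact heQ'
      · exact ⟨n, Finset.mem_union_left _ (Finset.mem_sdiff.mpr ⟨hn, hnS⟩)⟩
  -- internal edges shrink
  have hsub : T.internalEdges Q' ⊂ T.internalEdges Q := by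
    constructor
    · intro v hv
      rw [T.mem_internalEdges] at hv ⊢
      refine ⟨hv.1, fun n hn => ?_⟩
      by_cases h : T.parent^[n] v ∈ S
      · refine hv.2 (n + 1) ?_
        rw [Function.iterate_succ_apply', hpar _ h]
        exact heQ'
      · exact hv.2 n (Finset.mem_union_left _ (Finset.mem_sdiff.mpr ⟨hn, h⟩))
    · intro hcon
      have heIE' : e ∈ T.internalEdges Q' := hcon he.1
      rw [T.mem_internalEdges] at heIE'
      exact (heIE'.2 0) (by simpa using heQ')
  have hcardlt : (T.internalEdges Q').card < (T.internalEdges Q).card :=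
    Finset.card_lt_card hsub
  -- cardinalities and sums
  have hdisj : Disjoint (Q \ S) ({e} : Finset T.V) := by
    simp only [Finset.disjoint_singleton_right, Finset.mem_sdiff, not_and]
    intro h; exact absurd h heQ0
  have hk : 2 ≤ S.card := hcard
  have hkq : S.card ≤ Q.card := Finset.card_le_card hSQ
  have hcardQ' : Q'.card = Q.card - S.card + 1 := by
    rw [hQ'def, Finset.card_union_of_disjoint hdisj, Finset.card_sdiff_of_subset hSQ,
      Finset.card_singleton]
  have hsumQ' : (∑ v ∈ Q', w v) = (∑ v ∈ Q, w v) - (∑ v ∈ S, w v) + w e := by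
    rw [hQ'def, Finset.sum_union hdisj, Finset.sum_singleton]
    have := Finset.sum_sdiff (f := w) hSQ
    linarith
  -- the dichotomy
  by_cases hlam : T.lam w e > T.avg w Q
  · exact Or.inl hlam
  right
  refine ⟨hcut, hcardlt, ?_⟩
  push_neg at hlam
  have hq0 : (0 : ℝ) < (Q.card : ℝ) := by
    exact_mod_cast Finset.card_pos.mpr hQne
  have hq'0 : (0 : ℝ) < (Q'.card : ℝ) := by
    exact_mod_cast Finset.card_pos.mpr ⟨e, heQ'⟩
  have hcardQ'R : (Q'.card : ℝ) = (Q.card : ℝ) - (S.card : ℝ) + 1 := by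
    rw [hcardQ']
    push_cast [Nat.cast_sub hkq]
    ring
  set α := T.avg w Q with hαdef
  have hαq : α * (Q.card : ℝ) = ∑ v ∈ Q, w v := by
    rw [hαdef, DiTree.avg, div_mul_cancel₀ _ (ne_of_gt hq0)]
  have hk1 : (0 : ℝ) < (S.card : ℝ) - 1 := by
    have : (2 : ℝ) ≤ (S.card : ℝ) := by exact_mod_cast hk
    linarith
  have hlam' : (∑ v ∈ S, w v) - w e ≤ α * ((S.card : ℝ) - 1) := by
    have := hlam
    rw [DiTree.lam, div_le_iff₀ hk1] at this
    exact this
  have havg' : T.avg w Q' = (∑ v ∈ Q', w v) / (Q'.card : ℝ) := rfl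
  rw [ge_iff_le, havg', le_div_iff₀ hq'0, hsumQ', hcardQ'R]
  nlinarith [hαq, hlam']
end
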